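/- Let s ≥ 3 and s+2 ≤ t ≤ 2s-1 be integers. Then (t-s-1)η < δ, and moreover if t ≠ 2s-1 then (t-s)η < δ. -/
import Mathlib


/-- The pair `(s,t)` is regular if `s ≥ 11` and `s+3 ≤ t ≤ 2s-4`, or if
`(s,t) ∈ {(10,14),(10,15)}`. -/
def IsRegularPair (s t : ℕ) : Prop :=
  (11 ≤ s ∧ s + 3 ≤ t ∧ t ≤ 2 * s - 4) ∨ (s = 10 ∧ t = 14) ∨ (s = 10 ∧ t = 15)

open Classical in
/-- The exponent `α = α_{s,t}`. -/
noncomputable def ERalpha (s t : ℕ) : ℝ :=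
  if IsRegularPair s t then
    (((s : ℝ) - 2) * ((t : ℝ) - (s : ℝ)) * ((t : ℝ) + (s : ℝ) - 1) + 2 * (t : ℝ) - 2 * (s : ℝ)) /
      ((2 * (s : ℝ) - 3) * ((t : ℝ) - (s : ℝ)) * ((t : ℝ) + (s : ℝ) - 1) - 2 * (s : ℝ) + 4)
  else
    (((s : ℝ) - 2) * ((t : ℝ) - (s : ℝ)) * ((s : ℝ) - 1) + (s : ℝ) - 1) /
      ((2 * (s : ℝ) - 3) * ((t : ℝ) - (s : ℝ)) * ((s : ℝ) - 1) + 2 * (s : ℝ) - (t : ℝ))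

/-- `δ = s - (2s-1)α`. -/
noncomputable def ERdelta (s t : ℕ) : ℝ := (s : ℝ) - (2 * (s : ℝ) - 1) * ERalpha s t

/-- `η = 2(1-α) - δ`. -/
noncomputable def EReta (s t : ℕ) : ℝ := 2 * (1 - ERalpha s t) - ERdelta s t

/-- Assembly lemma: reduce the fractional inequality to a cleared-denominator one. -/
lemma eta_assemble (p N D X : ℝ) (hD : 0 < D)
    (key : X * ((2 * p - 3) * N - (p - 2) * D) < p * D - (2 * p - 1) * N) :
    X * (2 * (1 - N / D) - (p - (2 * p - 1) * (N / D))) < p - (2 * p - 1) * (N / D) := by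
  have hDne : D ≠ 0 := hD.ne'
  rw [show 2 * (1 - N / D) - (p - (2 * p - 1) * (N / D))
        = ((2 * p - 3) * N - (p - 2) * D) / D by field_simp; try ring,
      show p - (2 * p - 1) * (N / D) = (p * D - (2 * p - 1) * N) / D by field_simp; try ring,
      ← mul_div_assoc, div_lt_div_iff₀ hD hD]
  exact mul_lt_mul_of_pos_right key hD

/-- **Lemma (app2(b),(c)).** `(t-s-1)η < δ`, and if `t ≠ 2s-1` then `(t-s)η < δ`. -/
theorem eta_ineqs (s t : ℕ) (hs : 3 ≤ s) (ht1 : s + 2 ≤ t) (ht2 : t ≤ 2 * s - 1) :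
    ((t : ℝ) - (s : ℝ) - 1) * EReta s t < ERdelta s t ∧
      (t ≠ 2 * s - 1 → ((t : ℝ) - (s : ℝ)) * EReta s t < ERdelta s t) := by
  have hp : (3 : ℝ) ≤ (s : ℝ) := by exact_mod_cast hs
  have hq1 : (s : ℝ) + 2 ≤ (t : ℝ) := by exact_mod_cast ht1
  have hq2 : (t : ℝ) + 1 ≤ 2 * (s : ℝ) := by exact_mod_cast (by omega : t + 1 ≤ 2 * s)
  by_cases hreg : IsRegularPair s t
  · -- regular case
    have hα : ERalpha s t =
        (((s : ℝ) - 2) * ((t : ℝ) - (s : ℝ)) * ((t : ℝ) + (s : ℝ) - 1) + 2 * (t : ℝ) - 2 * (s : ℝ)) /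
          ((2 * (s : ℝ) - 3) * ((t : ℝ) - (s : ℝ)) * ((t : ℝ) + (s : ℝ) - 1) - 2 * (s : ℝ) + 4) := by
      rw [ERalpha, if_pos hreg]
    have hnat : 10 ≤ s ∧ s + 3 ≤ t ∧ t + 4 ≤ 2 * s := by
      rcases hreg with ⟨h1, h2, h3⟩ | ⟨h1, h2⟩ | ⟨h1, h2⟩ <;> omega
    have h10 : (10 : ℝ) ≤ (s : ℝ) := by exact_mod_cast hnat.1
    have hq3 : (s : ℝ) + 3 ≤ (t : ℝ) := by exact_mod_cast hnat.2.1
    have hq4 : (t : ℝ) + 4 ≤ 2 * (s : ℝ) := by exact_mod_cast hnat.2.2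
    set p : ℝ := (s : ℝ)
    set q : ℝ := (t : ℝ)
    have hb : (0 : ℝ) ≤ q - p - 3 := by linarith
    have hc : (0 : ℝ) ≤ 2 * p - 4 - q := by linarith
    have ha : (0 : ℝ) ≤ p - 10 := by linarith
    set N : ℝ := (p - 2) * (q - p) * (q + p - 1) + 2 * q - 2 * p with hN
    set D : ℝ := (2 * p - 3) * (q - p) * (q + p - 1) - 2 * p + 4 with hD'
    have hD : 0 < D := by
      rw [hD']; nlinarith [mul_nonneg hb hc, mul_nonneg ha hb, mul_nonneg ha hc,
        mul_nonneg ha (mul_nonneg ha hb), sq_nonneg (p - 10)]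
    have keyS : (q - p) * ((2 * p - 3) * N - (p - 2) * D) < p * D - (2 * p - 1) * N := by
      rw [hN, hD']
      nlinarith [mul_nonneg hb hc, mul_nonneg ha (mul_nonneg hb hc), mul_nonneg ha hb,
        mul_nonneg ha hc, mul_nonneg ha (mul_nonneg ha hb)]
    have keyW : (q - p - 1) * ((2 * p - 3) * N - (p - 2) * D) < p * D - (2 * p - 1) * N := by
      rw [hN, hD']
      nlinarith [mul_nonneg hb hc, mul_nonneg ha (mul_nonneg hb hc), mul_nonneg ha hb,
        mul_nonneg ha hc, mul_nonneg ha (mul_nonneg ha hb)]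
    constructor
    · rw [EReta, ERdelta, hα]
      exact eta_assemble p N D (q - p - 1) hD keyW
    · intro _
      rw [EReta, ERdelta, hα]
      exact eta_assemble p N D (q - p) hD keyS
  · -- exceptional case
    have hα : ERalpha s t =
        (((s : ℝ) - 2) * ((t : ℝ) - (s : ℝ)) * ((s : ℝ) - 1) + (s : ℝ) - 1) /
          ((2 * (s : ℝ) - 3) * ((t : ℝ) - (s : ℝ)) * ((s : ℝ) - 1) + 2 * (s : ℝ) - (t : ℝ)) := by
      rw [ERalpha, if_neg hreg]
    have hq5 : (t : ℝ) + 2 ≤ 2 * (s : ℝ) ∨ t = 2 * s - 1 := by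
      rcases eq_or_ne t (2 * s - 1) with h | h
      · exact Or.inr h
      · exact Or.inl (by exact_mod_cast (by omega : t + 2 ≤ 2 * s))
    set p : ℝ := (s : ℝ)
    set q : ℝ := (t : ℝ)
    have ha : (0 : ℝ) ≤ p - 3 := by linarith
    have hb : (0 : ℝ) ≤ q - p - 2 := by linarith
    have hc : (0 : ℝ) ≤ 2 * p - 1 - q := by linarith
    set N : ℝ := (p - 2) * (q - p) * (p - 1) + p - 1 with hN
    set D : ℝ := (2 * p - 3) * (q - p) * (p - 1) + 2 * p - q with hD'
    have hD : 0 < D := by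
      rw [hD']; nlinarith [mul_nonneg ha hb, mul_nonneg ha (mul_nonneg ha hb)]
    have keyW : (q - p - 1) * ((2 * p - 3) * N - (p - 2) * D) < p * D - (2 * p - 1) * N := by
      rw [hN, hD']
      nlinarith [mul_nonneg hb hc, mul_nonneg ha (mul_nonneg hb hc), mul_nonneg ha hb,
        mul_nonneg ha hc, mul_nonneg ha (mul_nonneg ha hb)]
    constructor
    · rw [EReta, ERdelta, hα]
      exact eta_assemble p N D (q - p - 1) hD keyW
    · intro hne
      have hq5' : q + 2 ≤ 2 * p := by
        rcases hq5 with h | h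
        · exact h
        · exact absurd h hne
      have hc' : (0 : ℝ) ≤ 2 * p - 2 - q := by linarith
      have keyS : (q - p) * ((2 * p - 3) * N - (p - 2) * D) < p * D - (2 * p - 1) * N := by
        rw [hN, hD']
        nlinarith [mul_nonneg hb hc', mul_nonneg ha (mul_nonneg hb hc'), mul_nonneg ha hb,
          mul_nonneg ha hc', mul_nonneg ha (mul_nonneg ha hb)]
      rw [EReta, ERdelta, hα]
      exact eta_assemble p N D (q - p) hD keyS
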